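/- Let C be a category with all finite limits and colimits. Define W = {f : A ⟶ B | there exists some morphism B ⟶ A in C} (the weak equivalences), TFib = the class of split epimorphisms, Cof = TFib.llp, and Fib = (Cof ∩ W).rlp. Then (W, Cof, Fib) is a model structure on C (the generalized core model structure): W satisfies two-out-of-three, the pairs (Cof, TFib) and (Cof ∩ W, Fib) are weak factorization systems, and Fib ∩ W = TFib, i.e. the acyclic fibrations are exactly the split epimorphisms. -/

import Mathlib

open CategoryTheory CategoryTheory.Limits

universe v u

section Preliminaries

variable {C : Type u} [Category.{v} C]

/-- The right lifting class of a class of morphisms. -/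
def MorphismPropertyRLP (S : MorphismProperty C) : MorphismProperty C :=
  fun _ _ g => ∀ ⦃A B : C⦄ (f : A ⟶ B), S f → HasLiftingProperty f g

/-- The left lifting class of a class of morphisms. -/
def MorphismPropertyLLP (S : MorphismProperty C) : MorphismProperty C :=
  fun _ _ f => ∀ ⦃X Y : C⦄ (g : X ⟶ Y), S g → HasLiftingProperty f g

/-- `(L, R)` is a weak factorization system. -/
structure IsWFS (L R : MorphismProperty C) : Prop where
  llp_eq : L = MorphismPropertyLLP R
  rlp_eq : R = MorphismPropertyRLP L
  factor : ∀ ⦃X Y : C⦄ (f : X ⟶ Y),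
    ∃ (Z : C) (l : X ⟶ Z) (r : Z ⟶ Y), L l ∧ R r ∧ l ≫ r = f

/-- The two-out-of-three property for a class of morphisms. -/
def TwoOfThree (W : MorphismProperty C) : Prop :=
  ∀ ⦃X Y Z : C⦄ (f : X ⟶ Y) (g : Y ⟶ Z),
    (W f → W g → W (f ≫ g)) ∧ (W f → W (f ≫ g) → W g) ∧ (W g → W (f ≫ g) → W f)

/-- `(W, Cof, Fib)` is a model structure. -/
structure IsModelStructure (W Cof Fib : MorphismProperty C) : Prop where
  twoOfThree : TwoOfThree W
  wfs₁ : IsWFS Cof (fun _ _ f => Fib f ∧ W f)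
  wfs₂ : IsWFS (fun _ _ f => Cof f ∧ W f) Fib

end Preliminaries

section Aux

variable {C : Type u} [Category.{v} C]

/-- A coproduct injection lifts against any split epimorphism. -/
lemma gcms_hlp_inl [HasBinaryCoproducts C] (X Y : C) {P Q : C} (g : P ⟶ Q)
    (hg : IsSplitEpi g) : HasLiftingProperty (coprod.inl : X ⟶ X ⨿ Y) g := by
  haveI := hg
  constructor
  intro u v sq
  exact ⟨⟨{ l := coprod.desc u ((coprod.inr ≫ v) ≫ section_ g)
            fac_left := by simp [coprod.inl_desc, coprod.inr_desc, coprod.inl_desc_assoc, coprod.inr_desc_assoc, prod.lift_fst, prod.lift_snd, prod.lift_fst_assoc, prod.lift_snd_assoc]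
            fac_right := by
              apply coprod.hom_ext
              · simpa [coprod.inl_desc, coprod.inr_desc, coprod.inl_desc_assoc, coprod.inr_desc_assoc, prod.lift_fst, prod.lift_snd, prod.lift_fst_assoc, prod.lift_snd_assoc] using sq.w
              · simp [Category.assoc, IsSplitEpi.id, coprod.inl_desc, coprod.inr_desc, coprod.inl_desc_assoc, coprod.inr_desc_assoc, prod.lift_fst, prod.lift_snd, prod.lift_fst_assoc, prod.lift_snd_assoc] }⟩⟩

/-- The map from an initial object lifts against any split epimorphism. -/
lemma gcms_hlp_initial [HasInitial C] (X : C) {P Q : C} (g : P ⟶ Q)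
    (hg : IsSplitEpi g) : HasLiftingProperty (initial.to X) g := by
  haveI := hg
  constructor
  intro u v sq
  exact ⟨⟨{ l := v ≫ section_ g
            fac_left := initial.hom_ext _ _
            fac_right := by simp [Category.assoc, IsSplitEpi.id] }⟩⟩

/-- The key lemma: for any `f : X ⟶ Y`, the morphism
`coprod.desc f prod.snd : X ⨿ (X ⨯ Y) ⟶ Y` has the right lifting property against
any morphism `f'` that lifts against all split epimorphisms and admits a backward
morphism `r`. -/
lemma gcms_fib_desc [HasBinaryCoproducts C] [HasBinaryProducts C]
    {X Y A B : C} (f : X ⟶ Y) (f' : A ⟶ B)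
    (hcof : ∀ ⦃P Q : C⦄ (g : P ⟶ Q), IsSplitEpi g → HasLiftingProperty f' g)
    (r : B ⟶ A) :
    HasLiftingProperty f' (coprod.desc f (prod.snd : X ⨯ Y ⟶ Y)) := by
  -- first, lift `f'` against the split epi `coprod.desc f' (𝟙 B)`
  have hsplit : IsSplitEpi (coprod.desc f' (𝟙 B)) :=
    IsSplitEpi.mk' ⟨coprod.inr, by simp [coprod.inl_desc, coprod.inr_desc, coprod.inl_desc_assoc, coprod.inr_desc_assoc, prod.lift_fst, prod.lift_snd, prod.lift_fst_assoc, prod.lift_snd_assoc]⟩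
  haveI := hcof (coprod.desc f' (𝟙 B)) hsplit
  have sq0 : CommSq (coprod.inl : A ⟶ A ⨿ B) f' (coprod.desc f' (𝟙 B)) (𝟙 B) :=
    ⟨by simp [coprod.inl_desc, coprod.inr_desc, coprod.inl_desc_assoc, coprod.inr_desc_assoc, prod.lift_fst, prod.lift_snd, prod.lift_fst_assoc, prod.lift_snd_assoc]⟩
  obtain ⟨⟨l, hl₁, hl₂⟩⟩ := (HasLiftingProperty.sq_hasLift sq0).exists_lift
  constructor
  intro u v sq
  refine ⟨⟨{ l := l ≫ coprod.desc u
               (prod.lift (r ≫ u ≫ coprod.desc (𝟙 X) prod.fst) v ≫ coprod.inr)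
             fac_left := by
               rw [← Category.assoc, hl₁]; simp [coprod.inl_desc, coprod.inr_desc, coprod.inl_desc_assoc, coprod.inr_desc_assoc, prod.lift_fst, prod.lift_snd, prod.lift_fst_assoc, prod.lift_snd_assoc]
             fac_right := ?_ }⟩⟩
  have hk : (prod.lift (r ≫ u ≫ coprod.desc (𝟙 X) prod.fst) v ≫ coprod.inr) ≫
      coprod.desc f (prod.snd : X ⨯ Y ⟶ Y) = v := by
    simp [coprod.inl_desc, coprod.inr_desc, coprod.inl_desc_assoc, coprod.inr_desc_assoc, prod.lift_fst, prod.lift_snd, prod.lift_fst_assoc, prod.lift_snd_assoc]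
  rw [Category.assoc, coprod.desc_comp, hk, sq.w]
  have : coprod.desc (f' ≫ v) v = coprod.desc f' (𝟙 B) ≫ v := by simp
  rw [this, ← Category.assoc, hl₂, Category.id_comp]

end Aux

/-- The generalized core model structure on a finitely bicomplete category `C`:
weak equivalences `W = {f : A ⟶ B | ∃ B ⟶ A}`, trivial fibrations the split
epimorphisms, cofibrations their left lifting class, fibrations the right lifting
class of the acyclic cofibrations.  `W` satisfies two-out-of-three, the pairs
`(Cof, TFib)` and `(Cof ∩ W, Fib)` are weak factorization systems, and the acyclic
fibrations are exactly the split epimorphisms. -/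
theorem generalizedCore_modelStructure
    {C : Type u} [Category.{v} C] [HasFiniteLimits C] [HasFiniteColimits C]
    (W TFib Cof Fib : MorphismProperty C)
    (hW : W = fun A B _ => Nonempty (B ⟶ A))
    (hTFib : TFib = fun _ _ f => IsSplitEpi f)
    (hCof : Cof = MorphismPropertyLLP TFib)
    (hFib : Fib = MorphismPropertyRLP (fun _ _ f => Cof f ∧ W f)) :
    IsModelStructure W Cof Fib ∧
    TwoOfThree W ∧
    IsWFS Cof TFib ∧
    IsWFS (fun _ _ f => Cof f ∧ W f) Fib ∧
    (fun _ _ f => Fib f ∧ W f : MorphismProperty C) = TFib := by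
  subst hW hTFib hCof hFib
  -- abbreviations
  set W : MorphismProperty C := fun A B _ => Nonempty (B ⟶ A) with hW
  set TFib : MorphismProperty C := fun _ _ f => IsSplitEpi f with hTFib
  set Cof : MorphismProperty C := MorphismPropertyLLP TFib with hCof
  set Fib : MorphismProperty C := MorphismPropertyRLP (fun _ _ f => Cof f ∧ W f)
    with hFib
  -- basic cofibrations
  have cof_inl : ∀ (X Y : C), Cof (coprod.inl : X ⟶ X ⨿ Y) := by
    intro X Y P Q g hg
    exact gcms_hlp_inl X Y g hg
  have cof_initial : ∀ (X : C), Cof (initial.to X) := by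
    intro X P Q g hg
    exact gcms_hlp_initial X g hg
  -- split epis are fibrations
  have tfib_fib : ∀ {X Y : C} (g : X ⟶ Y), IsSplitEpi g → Fib g := by
    intro X Y g hg A B f hf
    exact hf.1 g hg
  -- the fibration part of the factorization
  have fib_p : ∀ {X Y : C} (f : X ⟶ Y),
      Fib (coprod.desc f (prod.snd : X ⨯ Y ⟶ Y)) := by
    intro X Y f A B f' hf'
    obtain ⟨r⟩ := hf'.2
    exact gcms_fib_desc f f' hf'.1 r
  -- the cofibration part of the factorization is an acyclic cofibration
  have acof_inl : ∀ {X Y : C} (f : X ⟶ Y),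
      Cof (coprod.inl : X ⟶ X ⨿ (X ⨯ Y)) ∧ W (coprod.inl : X ⟶ X ⨿ (X ⨯ Y)) :=
    fun {X Y} _ => ⟨cof_inl X (X ⨯ Y), ⟨coprod.desc (𝟙 X) prod.fst⟩⟩
  -- every morphism in LLP(Fib) is a weak equivalence
  have llpfib_w : ∀ {A B : C} (f : A ⟶ B),
      MorphismPropertyLLP Fib f → W f := by
    intro A B f hf
    haveI : HasLiftingProperty f (coprod.desc f (prod.snd : A ⨯ B ⟶ B)) :=
      hf _ (fib_p f)
    have sq : CommSq (coprod.inl : A ⟶ A ⨿ (A ⨯ B)) f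
        (coprod.desc f (prod.snd : A ⨯ B ⟶ B)) (𝟙 B) := ⟨by simp [coprod.inl_desc, coprod.inr_desc, coprod.inl_desc_assoc, coprod.inr_desc_assoc, prod.lift_fst, prod.lift_snd, prod.lift_fst_assoc, prod.lift_snd_assoc]⟩
    obtain ⟨⟨l, hl₁, hl₂⟩⟩ := (HasLiftingProperty.sq_hasLift sq).exists_lift
    exact ⟨l ≫ coprod.desc (𝟙 A) prod.fst⟩
  -- Fib ∩ W = TFib
  have fibw_eq : (fun _ _ f => Fib f ∧ W f : MorphismProperty C) = TFib := by
    funext X Y g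
    apply propext
    constructor
    · rintro ⟨hg, ⟨t⟩⟩
      -- factor g through X ⨿ (X ⨯ Y); the right part is a split epi since t exists
      haveI : HasLiftingProperty (coprod.inl : X ⟶ X ⨿ (X ⨯ Y)) g :=
        hg _ (acof_inl g)
      have sq : CommSq (𝟙 X) (coprod.inl : X ⟶ X ⨿ (X ⨯ Y)) g
          (coprod.desc g (prod.snd : X ⨯ Y ⟶ Y)) := ⟨by simp [coprod.inl_desc, coprod.inr_desc, coprod.inl_desc_assoc, coprod.inr_desc_assoc, prod.lift_fst, prod.lift_snd, prod.lift_fst_assoc, prod.lift_snd_assoc]⟩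
      obtain ⟨⟨l, hl₁, hl₂⟩⟩ := (HasLiftingProperty.sq_hasLift sq).exists_lift
      exact IsSplitEpi.mk' ⟨(prod.lift t (𝟙 Y) ≫ coprod.inr) ≫ l, by
        rw [Category.assoc, hl₂]; simp [coprod.inl_desc, coprod.inr_desc, coprod.inl_desc_assoc, coprod.inr_desc_assoc, prod.lift_fst, prod.lift_snd, prod.lift_fst_assoc, prod.lift_snd_assoc]⟩
    · intro hg
      refine ⟨tfib_fib g hg, ?_⟩
      haveI : IsSplitEpi g := hg
      exact ⟨section_ g⟩
  -- TFib = RLP(Cof)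
  have tfib_rlp : TFib = MorphismPropertyRLP Cof := by
    funext X Y g
    apply propext
    constructor
    · intro hg A B f hf
      exact hf g hg
    · intro hg
      haveI : HasLiftingProperty (initial.to Y) g := hg _ (cof_initial Y)
      have sq : CommSq (initial.to X) (initial.to Y) g (𝟙 Y) :=
        ⟨initial.hom_ext _ _⟩
      obtain ⟨⟨l, hl₁, hl₂⟩⟩ := (HasLiftingProperty.sq_hasLift sq).exists_lift
      exact IsSplitEpi.mk' ⟨l, by simpa using hl₂⟩
  -- Cof ∩ W = LLP(Fib)
  have acof_llp : (fun _ _ f => Cof f ∧ W f : MorphismProperty C)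
      = MorphismPropertyLLP Fib := by
    funext A B f
    apply propext
    constructor
    · intro hf X Y g hg
      exact hg f hf
    · intro hf
      refine ⟨?_, llpfib_w f hf⟩
      intro X Y g hg
      exact hf g (tfib_fib g hg)
  -- the two weak factorization systems
  have wfs₁ : IsWFS Cof TFib := by
    refine ⟨rfl, tfib_rlp, ?_⟩
    intro X Y f
    refine ⟨X ⨿ Y, coprod.inl, coprod.desc f (𝟙 Y), cof_inl X Y,
      IsSplitEpi.mk' ⟨coprod.inr, by simp [coprod.inl_desc, coprod.inr_desc, coprod.inl_desc_assoc, coprod.inr_desc_assoc, prod.lift_fst, prod.lift_snd, prod.lift_fst_assoc, prod.lift_snd_assoc]⟩, by simp [coprod.inl_desc, coprod.inr_desc, coprod.inl_desc_assoc, coprod.inr_desc_assoc, prod.lift_fst, prod.lift_snd, prod.lift_fst_assoc, prod.lift_snd_assoc]⟩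
  have wfs₂ : IsWFS (fun _ _ f => Cof f ∧ W f) Fib := by
    refine ⟨acof_llp, rfl, ?_⟩
    intro X Y f
    exact ⟨X ⨿ (X ⨯ Y), coprod.inl, coprod.desc f prod.snd, acof_inl f,
      fib_p f, by simp [coprod.inl_desc, coprod.inr_desc, coprod.inl_desc_assoc, coprod.inr_desc_assoc, prod.lift_fst, prod.lift_snd, prod.lift_fst_assoc, prod.lift_snd_assoc]⟩
  -- two out of three
  have two3 : TwoOfThree W := by
    intro X Y Z f g
    refine ⟨?_, ?_, ?_⟩
    · rintro ⟨r⟩ ⟨s⟩; exact ⟨s ≫ r⟩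
    · rintro ⟨r⟩ ⟨t⟩; exact ⟨t ≫ f⟩
    · rintro ⟨s⟩ ⟨t⟩; exact ⟨g ≫ t⟩
  refine ⟨⟨two3, ?_, wfs₂⟩, two3, wfs₁, wfs₂, fibw_eq⟩
  rw [fibw_eq]
  exact wfs₁
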